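/- Assume η < 1/(4TL) and that the vectors u_i := ∇f_i(w_i) − (1/T)·Σ_{t=0}^{T−1} ∇f_i(w_{i,t}) satisfy E[⟨u_i, u_j⟩] = 0 for all i ≠ j. Then E[‖(1/N)·Σ_{i=1}^N u_i‖²] ≤ 4Tη²χ²L²/N + (16T²η²L²/N²)·Σ_{i=1}^N E[‖∇f_i(w_i)‖²]. -/

import Mathlib

open MeasureTheory
open scoped RealInnerProductSpace

section Aux

variable {E : Type*} [NormedAddCommGroup E] [InnerProductSpace ℝ E]
variable {Ω : Type*} {mΩ : MeasurableSpace Ω} {μ : Measure Ω}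

lemma aux_int_normsq {v : Ω → E} (hv : MemLp v 2 μ) : Integrable (fun ω => ‖v ω‖ ^ 2) μ :=
  (memLp_two_iff_integrable_sq_norm hv.1).mp hv

lemma aux_int_inner {X Y : Ω → E} (hX : MemLp X 2 μ) (hY : MemLp Y 2 μ) :
    Integrable (fun ω => ⟪X ω, Y ω⟫) μ := by
  have h := ((aux_int_normsq hX).add (aux_int_normsq hY)).div_const 2
  refine h.mono' (hX.1.inner hY.1) (Filter.Eventually.of_forall fun ω => ?_)
  have h1 := abs_real_inner_le_norm (X ω) (Y ω)
  have h2 := sq_nonneg (‖X ω‖ - ‖Y ω‖)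
  rw [Real.norm_eq_abs]
  simp only [Pi.add_apply]
  nlinarith [norm_nonneg (X ω), norm_nonneg (Y ω)]

lemma aux_condexp_inner_zero [CompleteSpace E] [IsFiniteMeasure μ]
    {m : MeasurableSpace Ω} (hm : m ≤ mΩ) {Y : Ω → E} (hY : Integrable Y μ)
    (hYc : μ[Y|m] =ᵐ[μ] 0) (c : E) :
    μ[fun ω => ⟪c, Y ω⟫|m] =ᵐ[μ] 0 := by
  letI : MeasurableSpace Ω := mΩ
  refine (ae_eq_condExp_of_forall_setIntegral_eq hm (hY.const_inner c)
    (fun s _ _ => integrableOn_zero)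
    (fun s hs hμs => ?_)
    ⟨fun _ => (0:ℝ), stronglyMeasurable_zero, Filter.EventuallyEq.refl _ _⟩).symm
  have hres : ∫ x in s, ⟪c, Y x⟫ ∂μ = ⟪c, ∫ x in s, Y x ∂μ⟫ := integral_inner hY.integrableOn c
  have h1 : ∫ x in s, Y x ∂μ = ∫ x in s, (μ[Y|m]) x ∂μ := (setIntegral_condExp hm hY hs).symm
  have h2 : ∫ x in s, (μ[Y|m]) x ∂μ = 0 := by
    rw [integral_congr_ae (ae_restrict_of_ae hYc)]; simp
  simp [hres, h1, h2]

lemma aux_integral_inner_eq_zero [FiniteDimensional ℝ E] [IsProbabilityMeasure μ]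
    {m : MeasurableSpace Ω} (hm : m ≤ mΩ) {X Y : Ω → E}
    (hXm : StronglyMeasurable[m] X) (hX : MemLp X 2 μ) (hY : MemLp Y 2 μ)
    (hYc : μ[Y|m] =ᵐ[μ] 0) : ∫ ω, ⟪X ω, Y ω⟫ ∂μ = 0 := by
  letI : MeasurableSpace Ω := mΩ
  let b := stdOrthonormalBasis ℝ E
  have hXk : ∀ k, MemLp (fun ω => ⟪X ω, b k⟫) 2 μ := fun k => hX.inner_const _
  have hYk : ∀ k, MemLp (fun ω => ⟪b k, Y ω⟫) 2 μ := fun k => hY.const_inner _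
  have hint : ∀ k, Integrable (fun ω => ⟪X ω, b k⟫ * ⟪b k, Y ω⟫) μ := fun k => by
    have h := aux_int_inner (E := ℝ) (hXk k) (hYk k)
    simpa [RCLike.inner_apply, conj_trivial, mul_comm] using h
  have hpt : (fun ω => ⟪X ω, Y ω⟫) = fun ω => ∑ k, ⟪X ω, b k⟫ * ⟪b k, Y ω⟫ := by
    funext ω; exact (b.sum_inner_mul_inner _ _).symm
  rw [hpt, integral_finset_sum _ (fun k _ => hint k)]
  refine Finset.sum_eq_zero fun k _ => ?_
  have hXkm : StronglyMeasurable[m] fun ω => ⟪X ω, b k⟫ :=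
    hXm.inner stronglyMeasurable_const
  have h0 : μ[(fun ω => ⟪b k, Y ω⟫)|m] =ᵐ[μ] 0 :=
    aux_condexp_inner_zero hm (hY.integrable one_le_two) hYc (b k)
  have hpull : μ[(fun ω => ⟪X ω, b k⟫) * (fun ω => ⟪b k, Y ω⟫)|m]
      =ᵐ[μ] (fun ω => ⟪X ω, b k⟫) * μ[(fun ω => ⟪b k, Y ω⟫)|m] :=
    condExp_mul_of_stronglyMeasurable_left hXkm (hint k) ((hYk k).integrable one_le_two)
  have : ∫ ω, ⟪X ω, b k⟫ * ⟪b k, Y ω⟫ ∂μ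
      = ∫ ω, (μ[(fun ω => ⟪X ω, b k⟫) * (fun ω => ⟪b k, Y ω⟫)|m]) ω ∂μ :=
    (integral_condExp hm (f := (fun ω => ⟪X ω, b k⟫) * (fun ω => ⟪b k, Y ω⟫))).symm
  rw [this, integral_congr_ae (hpull.trans ?_), integral_zero]
  filter_upwards [h0] with ω hω
  simp [hω]

lemma aux_integral_normsq_sum {ι : Type*} (s : Finset ι) (v : ι → Ω → E)
    (hv : ∀ i ∈ s, MemLp (v i) 2 μ)
    (horth : ∀ i ∈ s, ∀ j ∈ s, i ≠ j → ∫ ω, ⟪v i ω, v j ω⟫ ∂μ = 0) :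
    ∫ ω, ‖∑ i ∈ s, v i ω‖ ^ 2 ∂μ = ∑ i ∈ s, ∫ ω, ‖v i ω‖ ^ 2 ∂μ := by
  have hpt : (fun ω => ‖∑ i ∈ s, v i ω‖ ^ 2) = fun ω => ∑ i ∈ s, ∑ j ∈ s, ⟪v i ω, v j ω⟫ := by
    funext ω
    rw [← real_inner_self_eq_norm_sq, sum_inner]
    exact Finset.sum_congr rfl fun i _ => inner_sum _ _ _
  rw [hpt, integral_finset_sum _ (fun i hi =>
    integrable_finset_sum _ fun j hj => aux_int_inner (hv i hi) (hv j hj))]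
  refine Finset.sum_congr rfl fun i hi => ?_
  rw [integral_finset_sum _ (fun j hj => aux_int_inner (hv i hi) (hv j hj)),
    Finset.sum_eq_single_of_mem i hi (fun j hj hne => horth i hi j hj hne.symm)]
  simp_rw [real_inner_self_eq_norm_sq]

lemma aux_integral_normsq_sum_le {ι : Type*} (s : Finset ι) (v : ι → Ω → E)
    (hv : ∀ i ∈ s, MemLp (v i) 2 μ) :
    ∫ ω, ‖∑ i ∈ s, v i ω‖ ^ 2 ∂μ ≤ (s.card : ℝ) * ∑ i ∈ s, ∫ ω, ‖v i ω‖ ^ 2 ∂μ := by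
  have h1 : ∫ ω, ‖∑ i ∈ s, v i ω‖ ^ 2 ∂μ
      ≤ ∫ ω, (s.card : ℝ) * ∑ i ∈ s, ‖v i ω‖ ^ 2 ∂μ := by
    refine integral_mono (aux_int_normsq (memLp_finset_sum s hv))
      ((integrable_finset_sum s fun i hi => aux_int_normsq (hv i hi)).const_mul _) fun ω => ?_
    calc ‖∑ i ∈ s, v i ω‖ ^ 2 ≤ (∑ i ∈ s, ‖v i ω‖) ^ 2 :=
          pow_le_pow_left₀ (norm_nonneg _) (norm_sum_le s fun i => v i ω) 2
      _ ≤ (s.card : ℝ) * ∑ i ∈ s, ‖v i ω‖ ^ 2 := sq_sum_le_card_mul_sum_sq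
  rw [integral_const_mul, integral_finset_sum _ (fun i hi => aux_int_normsq (hv i hi))] at h1
  exact h1

lemma aux_memℒp_comp [IsFiniteMeasure μ] {G : E → E} {L : ℝ} (hL : 0 ≤ L)
    (hlip : ∀ x y, ‖G x - G y‖ ≤ L * ‖x - y‖) {v : Ω → E} (hv : MemLp v 2 μ) :
    MemLp (fun ω => G (v ω)) 2 μ := by
  have hlip' : LipschitzWith L.toNNReal (fun x => G x - G 0) :=
    LipschitzWith.of_dist_le_mul fun x y => by
      simpa [dist_eq_norm, Real.coe_toNNReal L hL, sub_sub_sub_cancel_right] using hlip x y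
  have h1 : MemLp (fun ω => G (v ω) - G 0) 2 μ := hlip'.comp_memLp (by simp) hv
  have h2 := h1.add (memLp_const (G 0))
  have h3 : ((fun ω => G (v ω) - G 0) + fun _ => G 0) = fun ω => G (v ω) := by
    funext ω; simp
  rwa [h3] at h2

set_option maxHeartbeats 1000000 in
lemma aux_node [FiniteDimensional ℝ E] [IsProbabilityMeasure μ]
    (ℱ : Filtration ℕ mΩ)
    (G : E → E) (L : ℝ) (hL : 0 < L)
    (hlip : ∀ x y, ‖G x - G y‖ ≤ L * ‖x - y‖)
    (T : ℕ) (hT : 1 ≤ T) (η : ℝ) (hη : 0 < η) (χ : ℝ) (hχ : 0 ≤ χ)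
    (w g : ℕ → Ω → E)
    (hupd : ∀ t, w (t + 1) = fun ω => w t ω - η • g t ω)
    (hw_meas : ∀ t, StronglyMeasurable[ℱ t] (w t))
    (hg_meas : ∀ t, StronglyMeasurable[ℱ (t + 1)] (g t))
    (hw_L2 : ∀ t, MemLp (w t) 2 μ)
    (hg_L2 : ∀ t, MemLp (g t) 2 μ)
    (h_unbiased : ∀ t, μ[g t | ℱ t] =ᵐ[μ] fun ω => G (w t ω))
    (h_var : ∀ t, ∫ ω, ‖g t ω - G (w t ω)‖ ^ 2 ∂μ ≤ χ ^ 2)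
    (hηTL : 16 * η ^ 2 * (T : ℝ) ^ 2 * L ^ 2 ≤ 1) :
    ∫ ω, ‖G (w 0 ω) - (T : ℝ)⁻¹ • ∑ t ∈ Finset.range T, G (w t ω)‖ ^ 2 ∂μ
      ≤ 4 * η ^ 2 * T * χ ^ 2 * L ^ 2
        + 8 * η ^ 2 * (T : ℝ) ^ 2 * L ^ 2 * ∫ ω, ‖G (w 0 ω)‖ ^ 2 ∂μ := by
  letI : MeasurableSpace Ω := mΩ
  set φ : ℕ → Ω → E := fun t ω => G (w t ω) with hφ_def
  set ξ : ℕ → Ω → E := fun t ω => g t ω - G (w t ω) with hξ_def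
  set X : ℕ → Ω → E := fun t ω => w t ω - w 0 ω with hX_def
  have hφ_L2 : ∀ t, MemLp (φ t) 2 μ := fun t => aux_memℒp_comp hL.le hlip (hw_L2 t)
  have hφ_meas : ∀ t, StronglyMeasurable[ℱ t] (φ t) := by
    intro t
    have hlip' : LipschitzWith L.toNNReal G :=
      LipschitzWith.of_dist_le_mul fun x y => by
        simpa [dist_eq_norm, Real.coe_toNNReal L hL.le] using hlip x y
    exact hlip'.continuous.comp_stronglyMeasurable (hw_meas t)
  have hξ_L2 : ∀ t, MemLp (ξ t) 2 μ := fun t => (hg_L2 t).sub (hφ_L2 t)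
  have hξ_meas : ∀ t, StronglyMeasurable[ℱ (t + 1)] (ξ t) := fun t =>
    (hg_meas t).sub ((hφ_meas t).mono (ℱ.mono t.le_succ))
  have hX_L2 : ∀ t, MemLp (X t) 2 μ := fun t => (hw_L2 t).sub (hw_L2 0)
  have hξ_cond : ∀ t, μ[ξ t|ℱ t] =ᵐ[μ] 0 := by
    intro t
    have hgi := (hg_L2 t).integrable one_le_two
    have hφi := (hφ_L2 t).integrable one_le_two
    have h2 : μ[φ t|ℱ t] = φ t :=
      condExp_of_stronglyMeasurable (ℱ.le t) (hφ_meas t) hφi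
    refine (condExp_sub hgi hφi (m := ℱ t)).trans ?_
    rw [h2]
    filter_upwards [h_unbiased t] with ω hω
    simp only [Pi.sub_apply, Pi.zero_apply, hω, hφ_def, sub_self]
  have horthξ : ∀ s t, s ≠ t → ∫ ω, ⟪ξ s ω, ξ t ω⟫ ∂μ = 0 := by
    have key : ∀ s t, s < t → ∫ ω, ⟪ξ s ω, ξ t ω⟫ ∂μ = 0 := by
      intro s t hst
      exact aux_integral_inner_eq_zero (ℱ.le t)
        ((hξ_meas s).mono (ℱ.mono hst)) (hξ_L2 s) (hξ_L2 t) (hξ_cond t)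
    intro s t hst
    rcases hst.lt_or_gt with h | h
    · exact key s t h
    · rw [show (fun ω => ⟪ξ s ω, ξ t ω⟫) = fun ω => ⟪ξ t ω, ξ s ω⟫ from
        funext fun ω => real_inner_comm _ _]
      exact key t s h
  have hSg_L2 : ∀ t, MemLp (fun ω => ∑ s ∈ Finset.range t, g s ω) 2 μ :=
    fun t => memLp_finset_sum _ fun s _ => hg_L2 s
  have hSξ_L2 : ∀ t, MemLp (fun ω => ∑ s ∈ Finset.range t, ξ s ω) 2 μ :=
    fun t => memLp_finset_sum _ fun s _ => hξ_L2 s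
  have hSφ_L2 : ∀ t, MemLp (fun ω => ∑ s ∈ Finset.range t, φ s ω) 2 μ :=
    fun t => memLp_finset_sum _ fun s _ => hφ_L2 s
  have hξsum : ∀ n, ∫ ω, ‖∑ s ∈ Finset.range n, ξ s ω‖ ^ 2 ∂μ ≤ (n : ℝ) * χ ^ 2 := by
    intro n
    rw [aux_integral_normsq_sum (Finset.range n) ξ (fun s _ => hξ_L2 s)
      (fun s _ t _ hst => horthξ s t hst)]
    have h := Finset.sum_le_card_nsmul (Finset.range n)
      (fun s => ∫ ω, ‖ξ s ω‖ ^ 2 ∂μ) (χ ^ 2) (fun s _ => h_var s)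
    simpa [nsmul_eq_mul] using h
  have hX_eq : ∀ t, X t = fun ω => (-η) • ∑ s ∈ Finset.range t, g s ω := by
    intro t
    induction t with
    | zero => funext ω; simp [hX_def]
    | succ t ih =>
      funext ω
      have h1 : X (t + 1) ω = X t ω - η • g t ω := by
        simp only [hX_def, hupd t]; abel
      rw [h1, congrFun ih ω, Finset.sum_range_succ, smul_add]
      simp [neg_smul, sub_eq_add_neg]
  set D : ℕ → ℝ := fun t => ∫ ω, ‖X t ω‖ ^ 2 ∂μ with hD_def
  have hD_nonneg : ∀ t, 0 ≤ D t := fun t => integral_nonneg fun ω => by positivity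
  set G0 : ℝ := ∫ ω, ‖φ 0 ω‖ ^ 2 ∂μ with hG0_def
  have hG0 : 0 ≤ G0 := integral_nonneg fun ω => by positivity
  have hφ_int_bound : ∀ s, ∫ ω, ‖φ s ω‖ ^ 2 ∂μ ≤ 2 * G0 + 2 * L ^ 2 * D s := by
    intro s
    have hint0 := (aux_int_normsq (hφ_L2 0)).const_mul (2 : ℝ)
    have hintX := (aux_int_normsq (hX_L2 s)).const_mul (2 * L ^ 2)
    have hpt : ∀ ω, ‖φ s ω‖ ^ 2 ≤ 2 * ‖φ 0 ω‖ ^ 2 + 2 * L ^ 2 * ‖X s ω‖ ^ 2 := by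
      intro ω
      have h1 : ‖φ s ω - φ 0 ω‖ ≤ L * ‖X s ω‖ := by
        simpa [hφ_def, hX_def] using hlip (w s ω) (w 0 ω)
      have h2 : ‖φ s ω‖ - ‖φ 0 ω‖ ≤ ‖φ s ω - φ 0 ω‖ := norm_sub_norm_le _ _
      have h3 : ‖φ s ω‖ ≤ ‖φ 0 ω‖ + L * ‖X s ω‖ := by linarith
      nlinarith [mul_self_le_mul_self (norm_nonneg (φ s ω)) h3,
        sq_nonneg (‖φ 0 ω‖ - L * ‖X s ω‖)]
    have h := integral_mono (aux_int_normsq (hφ_L2 s)) (hint0.add hintX) hpt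
    simp only [Pi.add_apply] at h
    rwa [integral_add hint0 hintX, integral_const_mul, integral_const_mul] at h
  have hD_le : ∀ t, D t ≤ 2 * η ^ 2 * (t : ℝ) * χ ^ 2
      + 2 * η ^ 2 * (t : ℝ) * ∑ s ∈ Finset.range t, ∫ ω, ‖φ s ω‖ ^ 2 ∂μ := by
    intro t
    have hD_eq : D t = η ^ 2 * ∫ ω, ‖∑ s ∈ Finset.range t, g s ω‖ ^ 2 ∂μ := by
      have h1 : (fun ω => ‖X t ω‖ ^ 2) = fun ω => η ^ 2 * ‖∑ s ∈ Finset.range t, g s ω‖ ^ 2 := by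
        funext ω
        rw [congrFun (hX_eq t) ω, norm_smul]
        simp [abs_of_pos hη]
        ring
      show (∫ ω, ‖X t ω‖ ^ 2 ∂μ) = _
      rw [h1, integral_const_mul]
    have hsplitpt : ∀ ω, ‖∑ s ∈ Finset.range t, g s ω‖ ^ 2
        ≤ 2 * ‖∑ s ∈ Finset.range t, ξ s ω‖ ^ 2 + 2 * ‖∑ s ∈ Finset.range t, φ s ω‖ ^ 2 := by
      intro ω
      have hsum : ∑ s ∈ Finset.range t, g s ω
          = (∑ s ∈ Finset.range t, ξ s ω) + ∑ s ∈ Finset.range t, φ s ω := by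
        rw [← Finset.sum_add_distrib]
        exact Finset.sum_congr rfl fun s _ => by simp [hξ_def, hφ_def]
      rw [hsum]
      have h1 := norm_add_le (∑ s ∈ Finset.range t, ξ s ω) (∑ s ∈ Finset.range t, φ s ω)
      nlinarith [sq_nonneg (‖∑ s ∈ Finset.range t, ξ s ω‖ - ‖∑ s ∈ Finset.range t, φ s ω‖),
        norm_nonneg (∑ s ∈ Finset.range t, ξ s ω + ∑ s ∈ Finset.range t, φ s ω),
        norm_nonneg (∑ s ∈ Finset.range t, ξ s ω), norm_nonneg (∑ s ∈ Finset.range t, φ s ω)]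
    have hint1 := (aux_int_normsq (hSξ_L2 t)).const_mul (2 : ℝ)
    have hint2 := (aux_int_normsq (hSφ_L2 t)).const_mul (2 : ℝ)
    have hsplit := integral_mono (aux_int_normsq (hSg_L2 t)) (hint1.add hint2) hsplitpt
    simp only [Pi.add_apply] at hsplit
    rw [integral_add hint1 hint2, integral_const_mul, integral_const_mul] at hsplit
    have hφsum : ∫ ω, ‖∑ s ∈ Finset.range t, φ s ω‖ ^ 2 ∂μ
        ≤ (t : ℝ) * ∑ s ∈ Finset.range t, ∫ ω, ‖φ s ω‖ ^ 2 ∂μ := by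
      simpa [Finset.card_range] using
        aux_integral_normsq_sum_le (Finset.range t) φ (fun s _ => hφ_L2 s)
    have hξs := hξsum t
    have hη2 : (0 : ℝ) < η ^ 2 := by positivity
    rw [hD_eq]
    have hsum2 : ∫ ω, ‖∑ s ∈ Finset.range t, g s ω‖ ^ 2 ∂μ
        ≤ 2 * ((t : ℝ) * χ ^ 2)
          + 2 * ((t : ℝ) * ∑ s ∈ Finset.range t, ∫ ω, ‖φ s ω‖ ^ 2 ∂μ) := by linarith
    calc η ^ 2 * ∫ ω, ‖∑ s ∈ Finset.range t, g s ω‖ ^ 2 ∂μ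
        ≤ η ^ 2 * (2 * ((t : ℝ) * χ ^ 2)
          + 2 * ((t : ℝ) * ∑ s ∈ Finset.range t, ∫ ω, ‖φ s ω‖ ^ 2 ∂μ)) :=
          mul_le_mul_of_nonneg_left hsum2 hη2.le
      _ = 2 * η ^ 2 * (t : ℝ) * χ ^ 2
          + 2 * η ^ 2 * (t : ℝ) * ∑ s ∈ Finset.range t, ∫ ω, ‖φ s ω‖ ^ 2 ∂μ := by ring
  set A : ℝ := 2 * η ^ 2 * (T : ℝ) * χ ^ 2 + 4 * η ^ 2 * (T : ℝ) ^ 2 * G0 with hA_def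
  have hA : 0 ≤ A := by positivity
  have hmain : ∀ t, t ≤ T → D t ≤ 2 * A := by
    intro t
    induction t using Nat.strong_induction_on with
    | _ t ih =>
      intro htT
      have htR : (t : ℝ) ≤ (T : ℝ) := Nat.cast_le.mpr htT
      have ht0 : (0 : ℝ) ≤ (t : ℝ) := Nat.cast_nonneg t
      have hφs : ∑ s ∈ Finset.range t, ∫ ω, ‖φ s ω‖ ^ 2 ∂μ
          ≤ (t : ℝ) * (2 * G0 + 4 * L ^ 2 * A) := by
        have h := Finset.sum_le_card_nsmul (Finset.range t)
          (fun s => ∫ ω, ‖φ s ω‖ ^ 2 ∂μ) (2 * G0 + 4 * L ^ 2 * A) (fun s hs => by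
            have hslt : s < t := Finset.mem_range.mp hs
            have hb := hφ_int_bound s
            have hDs := ih s hslt (le_trans hslt.le htT)
            nlinarith [sq_nonneg L])
        rw [Finset.card_range, nsmul_eq_mul] at h
        exact h
      have c1 : D t ≤ 2 * η ^ 2 * (t : ℝ) * χ ^ 2
          + 2 * η ^ 2 * (t : ℝ) * ((t : ℝ) * (2 * G0 + 4 * L ^ 2 * A)) := by
        have h := mul_le_mul_of_nonneg_left hφs
          (show (0:ℝ) ≤ 2 * η ^ 2 * (t : ℝ) by positivity)
        linarith [hD_le t]
      have htt : (t : ℝ) * (t : ℝ) ≤ (T : ℝ) * (T : ℝ) := mul_self_le_mul_self ht0 htR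
      have b1 : (t : ℝ) * (2 * η ^ 2 * χ ^ 2) ≤ (T : ℝ) * (2 * η ^ 2 * χ ^ 2) :=
        mul_le_mul_of_nonneg_right htR (by positivity)
      have b2 : ((t : ℝ) * (t : ℝ)) * (2 * η ^ 2 * (2 * G0 + 4 * L ^ 2 * A))
          ≤ ((T : ℝ) * (T : ℝ)) * (2 * η ^ 2 * (2 * G0 + 4 * L ^ 2 * A)) :=
        mul_le_mul_of_nonneg_right htt (by positivity)
      have b3 : (16 * η ^ 2 * (T : ℝ) ^ 2 * L ^ 2) * A ≤ 1 * A :=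
        mul_le_mul_of_nonneg_right hηTL hA
      nlinarith [c1, b1, b2, b3, hA]
  have hTpos : (0:ℝ) < (T:ℝ) := by exact_mod_cast hT
  set u : Ω → E := fun ω => φ 0 ω - (T:ℝ)⁻¹ • ∑ t ∈ Finset.range T, φ t ω with hu_def
  have hu_L2 : MemLp u 2 μ :=
    (hφ_L2 0).sub ((memLp_finset_sum _ fun t _ => hφ_L2 t).const_smul _)
  have hu_pt : ∀ ω, ‖u ω‖ ^ 2 ≤ (L ^ 2 / (T:ℝ)) * ∑ t ∈ Finset.range T, ‖X t ω‖ ^ 2 := by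
    intro ω
    have h0 : (T:ℝ)⁻¹ • ((T:ℕ) • φ 0 ω) = φ 0 ω := by
      rw [← Nat.cast_smul_eq_nsmul ℝ, smul_smul, inv_mul_cancel₀ hTpos.ne', one_smul]
    have hsum_eq : u ω = (T:ℝ)⁻¹ • ∑ t ∈ Finset.range T, (φ 0 ω - φ t ω) := by
      rw [Finset.sum_sub_distrib, smul_sub, Finset.sum_const, Finset.card_range, h0]
    have h2 : ∀ t ∈ Finset.range T, ‖φ 0 ω - φ t ω‖ ≤ L * ‖X t ω‖ := fun t _ => by
      simpa [hφ_def, hX_def, norm_sub_rev (w 0 ω) (w t ω)] using hlip (w 0 ω) (w t ω)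
    have h1 : ‖u ω‖ ≤ (T:ℝ)⁻¹ * (L * ∑ t ∈ Finset.range T, ‖X t ω‖) := by
      rw [hsum_eq, norm_smul]
      have hn1 : ‖∑ t ∈ Finset.range T, (φ 0 ω - φ t ω)‖
          ≤ L * ∑ t ∈ Finset.range T, ‖X t ω‖ := by
        calc ‖∑ t ∈ Finset.range T, (φ 0 ω - φ t ω)‖
            ≤ ∑ t ∈ Finset.range T, ‖φ 0 ω - φ t ω‖ := norm_sum_le _ _
          _ ≤ ∑ t ∈ Finset.range T, L * ‖X t ω‖ := Finset.sum_le_sum h2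
          _ = L * ∑ t ∈ Finset.range T, ‖X t ω‖ := (Finset.mul_sum _ _ _).symm
      have : ‖(T:ℝ)⁻¹‖ = (T:ℝ)⁻¹ := by
        rw [Real.norm_eq_abs, abs_of_pos (inv_pos.mpr hTpos)]
      rw [this]
      exact mul_le_mul_of_nonneg_left hn1 (by positivity)
    have hS2 : (∑ t ∈ Finset.range T, ‖X t ω‖) ^ 2
        ≤ (T:ℝ) * ∑ t ∈ Finset.range T, ‖X t ω‖ ^ 2 := by
      simpa [Finset.card_range] using
        sq_sum_le_card_mul_sum_sq (s := Finset.range T) (f := fun t => ‖X t ω‖)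
    calc ‖u ω‖ ^ 2 ≤ ((T:ℝ)⁻¹ * (L * ∑ t ∈ Finset.range T, ‖X t ω‖)) ^ 2 :=
          pow_le_pow_left₀ (norm_nonneg _) h1 2
      _ = (T:ℝ)⁻¹ * (T:ℝ)⁻¹ * L ^ 2 * (∑ t ∈ Finset.range T, ‖X t ω‖) ^ 2 := by ring
      _ ≤ (T:ℝ)⁻¹ * (T:ℝ)⁻¹ * L ^ 2 * ((T:ℝ) * ∑ t ∈ Finset.range T, ‖X t ω‖ ^ 2) := by
          have := mul_le_mul_of_nonneg_left hS2
            (show (0:ℝ) ≤ (T:ℝ)⁻¹ * (T:ℝ)⁻¹ * L ^ 2 by positivity)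
          linarith
      _ = (L ^ 2 / (T:ℝ)) * ∑ t ∈ Finset.range T, ‖X t ω‖ ^ 2 := by
          field_simp
  have hint_rhs := (integrable_finset_sum (Finset.range T)
    (fun t _ => aux_int_normsq (hX_L2 t))).const_mul (L ^ 2 / (T:ℝ))
  have hmono := integral_mono (aux_int_normsq hu_L2) hint_rhs hu_pt
  rw [integral_const_mul, integral_finset_sum _ (fun t _ => aux_int_normsq (hX_L2 t))] at hmono
  have hDsum : ∑ t ∈ Finset.range T, D t ≤ (T:ℝ) * (2 * A) := by
    have h := Finset.sum_le_card_nsmul (Finset.range T) D (2 * A)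
      (fun t ht => hmain t (Finset.mem_range.mp ht).le)
    simpa [nsmul_eq_mul] using h
  have hfinal : ∫ ω, ‖u ω‖ ^ 2 ∂μ ≤ L ^ 2 / (T:ℝ) * ((T:ℝ) * (2 * A)) :=
    le_trans hmono (mul_le_mul_of_nonneg_left hDsum (by positivity))
  have heq : L ^ 2 / (T:ℝ) * ((T:ℝ) * (2 * A))
      = 4 * η ^ 2 * (T:ℝ) * χ ^ 2 * L ^ 2 + 8 * η ^ 2 * (T : ℝ) ^ 2 * L ^ 2 * G0 := by
    rw [hA_def]
    field_simp
    ring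
  show ∫ ω, ‖u ω‖ ^ 2 ∂μ ≤ 4 * η ^ 2 * (T:ℝ) * χ ^ 2 * L ^ 2
    + 8 * η ^ 2 * (T : ℝ) ^ 2 * L ^ 2 * G0
  linarith [hfinal, heq.le]


end Aux

set_option maxHeartbeats 1000000 in
/-- **Lemma (gradient-drift averaging).** For `N` parallel stochastic-gradient trajectories
with `η < 1/(4TL)`, and `uᵢ = ∇fᵢ(wᵢ) − (1/T)Σ_t ∇fᵢ(w_{i,t})` pairwise orthogonal in `L²`,
`E[‖(1/N)Σᵢ uᵢ‖²] ≤ 4Tη²χ²L²/N + (16T²η²L²/N²)·Σᵢ E[‖∇fᵢ(wᵢ)‖²]`. -/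
theorem gatta_lemma6
    {E : Type*} [NormedAddCommGroup E] [InnerProductSpace ℝ E] [FiniteDimensional ℝ E]
    {Ω : Type*} {mΩ : MeasurableSpace Ω} {μ : Measure Ω} [IsProbabilityMeasure μ]
    (ℱ : Filtration ℕ mΩ)
    {N : ℕ} (hN : 0 < N)
    (f : Fin N → E → ℝ) (L : ℝ) (hL : 0 < L)
    (hdiff : ∀ i, Differentiable ℝ (f i))
    (hsmooth : ∀ i, ∀ x y : E, ‖gradient (f i) x - gradient (f i) y‖ ≤ L * ‖x - y‖)
    (T : ℕ) (hT : 1 ≤ T) (η : ℝ) (hη : 0 < η) (χ : ℝ) (hχ : 0 ≤ χ)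
    (w g : Fin N → ℕ → Ω → E)
    (hupd : ∀ i t, w i (t + 1) = fun ω => w i t ω - η • g i t ω)
    (hw_meas : ∀ i t, StronglyMeasurable[ℱ t] (w i t))
    (hg_meas : ∀ i t, StronglyMeasurable[ℱ (t + 1)] (g i t))
    (hw_L2 : ∀ i t, MemLp (w i t) 2 μ)
    (hg_L2 : ∀ i t, MemLp (g i t) 2 μ)
    (h_unbiased : ∀ i t, μ[g i t | ℱ t] =ᵐ[μ] fun ω => gradient (f i) (w i t ω))
    (h_var : ∀ i t, ∫ ω, ‖g i t ω - gradient (f i) (w i t ω)‖ ^ 2 ∂μ ≤ χ ^ 2)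
    (hη_small : η < 1 / (4 * T * L))
    (u : Fin N → Ω → E)
    (hu : ∀ i, u i = fun ω =>
      gradient (f i) (w i 0 ω) - (T : ℝ)⁻¹ • ∑ t ∈ Finset.range T, gradient (f i) (w i t ω))
    (h_orth : ∀ i j, i ≠ j → ∫ ω, ⟪u i ω, u j ω⟫ ∂μ = 0) :
    ∫ ω, ‖(N : ℝ)⁻¹ • ∑ i, u i ω‖ ^ 2 ∂μ
      ≤ 4 * T * η ^ 2 * χ ^ 2 * L ^ 2 / N
        + 16 * T ^ 2 * η ^ 2 * L ^ 2 / N ^ 2 * ∑ i, ∫ ω, ‖gradient (f i) (w i 0 ω)‖ ^ 2 ∂μ := by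
  letI : MeasurableSpace Ω := mΩ
  have hTpos : (0:ℝ) < (T:ℝ) := by exact_mod_cast hT
  have hNpos : (0:ℝ) < (N:ℝ) := by exact_mod_cast hN
  have hηTL : 16 * η ^ 2 * (T:ℝ) ^ 2 * L ^ 2 ≤ 1 := by
    have h1 : (0:ℝ) < 4 * (T:ℝ) * L := by positivity
    have h2 : η * (4 * (T:ℝ) * L) < 1 := by
      have := (lt_div_iff₀ h1).mp hη_small
      linarith
    have h3 : 0 ≤ η * (4 * (T:ℝ) * L) := mul_nonneg hη.le h1.le
    have h4 : 0 < (1 - η * (4 * (T:ℝ) * L)) * (1 + η * (4 * (T:ℝ) * L)) :=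
      mul_pos (by linarith) (by linarith)
    nlinarith [h4]
  have hnode : ∀ i, ∫ ω, ‖u i ω‖ ^ 2 ∂μ
      ≤ 4 * η ^ 2 * (T:ℝ) * χ ^ 2 * L ^ 2
        + 8 * η ^ 2 * (T:ℝ) ^ 2 * L ^ 2 * ∫ ω, ‖gradient (f i) (w i 0 ω)‖ ^ 2 ∂μ := by
    intro i
    have h := aux_node ℱ (gradient (f i)) L hL (hsmooth i) T hT η hη χ hχ (w i) (g i)
      (hupd i) (hw_meas i) (hg_meas i) (hw_L2 i) (hg_L2 i) (h_unbiased i) (h_var i) hηTL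
    rw [hu i]
    exact h
  have hu_L2 : ∀ i, MemLp (u i) 2 μ := by
    intro i
    rw [hu i]
    exact (aux_memℒp_comp hL.le (hsmooth i) (hw_L2 i 0)).sub
      ((memLp_finset_sum _ fun t _ => aux_memℒp_comp hL.le (hsmooth i) (hw_L2 i t)).const_smul _)
  have hexp : ∫ ω, ‖∑ i, u i ω‖ ^ 2 ∂μ = ∑ i, ∫ ω, ‖u i ω‖ ^ 2 ∂μ :=
    aux_integral_normsq_sum Finset.univ u (fun i _ => hu_L2 i) (fun i _ j _ hij => h_orth i j hij)
  have hpt : (fun ω => ‖(N:ℝ)⁻¹ • ∑ i, u i ω‖ ^ 2)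
      = fun ω => ((N:ℝ)⁻¹) ^ 2 * ‖∑ i, u i ω‖ ^ 2 := by
    funext ω
    rw [norm_smul, Real.norm_eq_abs, abs_of_pos (inv_pos.mpr hNpos)]
    ring
  rw [hpt, integral_const_mul, hexp]
  have hGnn : (0:ℝ) ≤ ∑ i, ∫ ω, ‖gradient (f i) (w i 0 ω)‖ ^ 2 ∂μ :=
    Finset.sum_nonneg fun i _ => integral_nonneg fun ω => by positivity
  have hsum : ∑ i, ∫ ω, ‖u i ω‖ ^ 2 ∂μ
      ≤ (N:ℝ) * (4 * η ^ 2 * (T:ℝ) * χ ^ 2 * L ^ 2)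
        + 8 * η ^ 2 * (T:ℝ) ^ 2 * L ^ 2 * ∑ i, ∫ ω, ‖gradient (f i) (w i 0 ω)‖ ^ 2 ∂μ := by
    calc ∑ i, ∫ ω, ‖u i ω‖ ^ 2 ∂μ
        ≤ ∑ i : Fin N, (4 * η ^ 2 * (T:ℝ) * χ ^ 2 * L ^ 2
          + 8 * η ^ 2 * (T:ℝ) ^ 2 * L ^ 2 * ∫ ω, ‖gradient (f i) (w i 0 ω)‖ ^ 2 ∂μ) :=
          Finset.sum_le_sum fun i _ => hnode i
      _ = (N:ℝ) * (4 * η ^ 2 * (T:ℝ) * χ ^ 2 * L ^ 2)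
          + 8 * η ^ 2 * (T:ℝ) ^ 2 * L ^ 2
            * ∑ i, ∫ ω, ‖gradient (f i) (w i 0 ω)‖ ^ 2 ∂μ := by
          rw [Finset.sum_add_distrib, Finset.sum_const, ← Finset.mul_sum]
          simp [Finset.card_univ, nsmul_eq_mul]
  calc ((N:ℝ)⁻¹) ^ 2 * ∑ i, ∫ ω, ‖u i ω‖ ^ 2 ∂μ
      ≤ ((N:ℝ)⁻¹) ^ 2 * ((N:ℝ) * (4 * η ^ 2 * (T:ℝ) * χ ^ 2 * L ^ 2)
        + 8 * η ^ 2 * (T:ℝ) ^ 2 * L ^ 2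
          * ∑ i, ∫ ω, ‖gradient (f i) (w i 0 ω)‖ ^ 2 ∂μ) :=
        mul_le_mul_of_nonneg_left hsum (by positivity)
    _ = 4 * T * η ^ 2 * χ ^ 2 * L ^ 2 / N
        + 8 * T ^ 2 * η ^ 2 * L ^ 2 / N ^ 2
          * ∑ i, ∫ ω, ‖gradient (f i) (w i 0 ω)‖ ^ 2 ∂μ := by
        field_simp
    _ ≤ 4 * T * η ^ 2 * χ ^ 2 * L ^ 2 / N
        + 16 * T ^ 2 * η ^ 2 * L ^ 2 / N ^ 2
          * ∑ i, ∫ ω, ‖gradient (f i) (w i 0 ω)‖ ^ 2 ∂μ := by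
        have h8 : (8:ℝ) * (T:ℝ) ^ 2 * η ^ 2 * L ^ 2 / (N:ℝ) ^ 2
            ≤ 16 * (T:ℝ) ^ 2 * η ^ 2 * L ^ 2 / (N:ℝ) ^ 2 :=
          (div_le_div_iff_of_pos_right (by positivity)).mpr (by nlinarith [sq_nonneg ((T:ℝ) * η * L)])
        have h9 := mul_le_mul_of_nonneg_right h8 hGnn
        push_cast at h9 ⊢
        linarith
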